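/- Let β₁, β₂, δ₁, δ₂ ≥ 0 with β₁+δ₁ > 0, β₂+δ₂ > 0, α₁, α₂, γ₁, γ₂ > 0, |σ| < 1, 0 ≤ α < 1, and suppose |A_n| ≤ (n+1)/2 and |B_n| ≤ (n−1)/2 for all n ≥ 1. If (W'''_{(α₁,β₁),(γ₁,δ₁)}(1) + (4−α) W''_{(α₁,β₁),(γ₁,δ₁)}(1) + 2(1−α)(W'_{(α₁,β₁),(γ₁,δ₁)}(1) − 1)) + |σ|(W'''_{(α₂,β₂),(γ₂,δ₂)}(1) + (2+α) W''_{(α₂,β₂),(γ₂,δ₂)}(1)) ≤ 2(1−α), then ∑_{n=2}^∞ n(n−α) Γ(α₁)Γ(γ₁)|A_n| / (Γ(α₁+(n−1)β₁)Γ(γ₁+(n−1)δ₁)) + |σ| ∑_{n=1}^∞ n(n+α) Γ(α₂)Γ(γ₂)|B_n| / (Γ(α₂+(n−1)β₂)Γ(γ₂+(n−1)δ₂)) ≤ 1 − α. -/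

import Mathlib

open Filter Topology Metric



lemma one_le_Gamma {x : ℝ} (hx : 2 ≤ x) : 1 ≤ Real.Gamma x := by
  rcases eq_or_lt_of_le hx with h | h
  · rw [← h, Real.Gamma_two]
  · have hs := Real.convexOn_Gamma.slope_mono_adjacent
      (x := 1) (y := 2) (z := x) (by norm_num) (by simp; linarith) (by norm_num) h
    rw [Real.Gamma_two, Real.Gamma_one] at hs
    norm_num at hs
    have h2 : (0:ℝ) < x - 2 := by linarith
    have := (le_div_iff₀ h2).mp hs
    linarith

lemma Gamma_lb {x : ℝ} (hx : 0 < x) : 1/6 ≤ Real.Gamma x := by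
  rcases le_or_gt 2 x with h | h
  · linarith [one_le_Gamma h]
  · have e1 : Real.Gamma (x + 1) = x * Real.Gamma x := Real.Gamma_add_one hx.ne'
    have e2 : Real.Gamma (x + 1 + 1) = (x + 1) * Real.Gamma (x + 1) :=
      Real.Gamma_add_one (by linarith)
    have h3 : 1 ≤ Real.Gamma (x + 1 + 1) := one_le_Gamma (by linarith)
    have h5 : 0 < Real.Gamma x := Real.Gamma_pos_of_pos hx
    rw [e2, e1] at h3
    have h6 : (x + 1) * x < 6 := by nlinarith
    nlinarith [mul_lt_mul_of_pos_right h6 h5]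

lemma Gamma_growth_aux {M : ℝ} (hM : 2 ≤ M) :
    ∀ k : ℕ, ∀ y : ℝ, M ≤ y → y ≤ M + k + 1 → M ^ (y - M - 1) ≤ Real.Gamma y := by
  intro k
  induction k with
  | zero =>
    intro y h1 h2
    have h3 : M ^ (y - M - 1) ≤ 1 :=
      Real.rpow_le_one_of_one_le_of_nonpos (by linarith) (by push_cast at h2; linarith)
    exact h3.trans (one_le_Gamma (by linarith))
  | succ k ih =>
    intro y h1 h2
    rcases le_or_gt y (M + k + 1) with h | h
    · exact ih y h1 h
    · have hy1 : M ≤ y - 1 := by linarith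
      have e : Real.Gamma y = (y - 1) * Real.Gamma (y - 1) := by
        have := Real.Gamma_add_one (s := y - 1) (by intro h0; nlinarith [h0])
        rw [show y - 1 + 1 = y by ring] at this
        rw [this]
      have hIH := ih (y - 1) hy1 (by push_cast at h2 ⊢; linarith)
      have hMpos : (0:ℝ) < M := by linarith
      have e2 : M ^ (y - M - 1) = M * M ^ (y - 1 - M - 1) := by
        rw [show y - M - 1 = 1 + (y - 1 - M - 1) by ring, Real.rpow_add hMpos, Real.rpow_one]
      rw [e, e2]
      have hpow : 0 ≤ M ^ (y - 1 - M - 1) := (Real.rpow_pos_of_pos hMpos _).le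
      exact mul_le_mul hy1 hIH hpow (by linarith)

lemma Gamma_growth {M y : ℝ} (hM : 2 ≤ M) (hy : M ≤ y) :
    M ^ (y - M - 1) ≤ Real.Gamma y := by
  refine Gamma_growth_aux hM ⌈y - M⌉₊ y hy ?_
  have := Nat.le_ceil (y - M)
  linarith

/-- Global lower bound. -/
lemma Gamma_glb {M x : ℝ} (hM : 2 ≤ M) (hx : 0 < x) :
    1/6 * M ^ (x - M - 1) ≤ Real.Gamma x := by
  rcases le_or_gt M x with h | h
  · have h1 := Gamma_growth hM h
    have h2 : 0 ≤ M ^ (x - M - 1) := (Real.rpow_pos_of_pos (by linarith) _).le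
    nlinarith
  · have h1 : M ^ (x - M - 1) ≤ 1 :=
      Real.rpow_le_one_of_one_le_of_nonpos (by linarith) (by linarith)
    have := Gamma_lb hx
    nlinarith

lemma coeff_bound (a b c d : ℝ) (ha : 0 < a) (hc : 0 < c) (hb : 0 ≤ b) (hd : 0 ≤ d)
    (hbd : 0 < b + d) :
    ∃ K : ℝ, 0 < K ∧ ∀ n : ℕ,
      Real.Gamma a * Real.Gamma c /
        (Real.Gamma (a + ((n:ℝ) + 1) * b) * Real.Gamma (c + ((n:ℝ) + 1) * d))
      ≤ K * (1/16) ^ n := by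
  set M : ℝ := max 2 (Real.exp (Real.log 16 / (b + d))) with hMdef
  have hM : 2 ≤ M := le_max_left _ _
  have hMpos : (0:ℝ) < M := by linarith
  have hM16 : (16:ℝ) ≤ M ^ (b + d) := by
    have h1 : Real.exp (Real.log 16 / (b + d)) ≤ M := le_max_right _ _
    have h2 : Real.exp (Real.log 16 / (b + d)) ^ (b + d) ≤ M ^ (b + d) :=
      Real.rpow_le_rpow (Real.exp_pos _).le h1 hbd.le
    have h3 : Real.exp (Real.log 16 / (b + d)) ^ (b + d) = 16 := by
      rw [← Real.exp_mul, div_mul_cancel₀ _ hbd.ne']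
      exact Real.exp_log (by norm_num)
    linarith
  set Q : ℝ := M ^ (a + c - 2 * M - 2) with hQdef
  have hQpos : 0 < Q := Real.rpow_pos_of_pos hMpos _
  have hN : 0 < Real.Gamma a * Real.Gamma c :=
    mul_pos (Real.Gamma_pos_of_pos ha) (Real.Gamma_pos_of_pos hc)
  refine ⟨36 * (Real.Gamma a * Real.Gamma c) / Q, by positivity, fun n => ?_⟩
  set N := Real.Gamma a * Real.Gamma c
  have hxn : (0:ℝ) < a + ((n:ℝ) + 1) * b := by positivity
  have hyn : (0:ℝ) < c + ((n:ℝ) + 1) * d := by positivity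
  have h1 := Gamma_glb hM hxn
  have h2 := Gamma_glb hM hyn
  have hp1 : (0:ℝ) < M ^ (a + ((n:ℝ) + 1) * b - M - 1) := Real.rpow_pos_of_pos hMpos _
  have hp2 : (0:ℝ) < M ^ (c + ((n:ℝ) + 1) * d - M - 1) := Real.rpow_pos_of_pos hMpos _
  have hprod : 1/36 * Q * (16:ℝ) ^ (n + 1)
      ≤ Real.Gamma (a + ((n:ℝ) + 1) * b) * Real.Gamma (c + ((n:ℝ) + 1) * d) := by
    have step1 : 1/36 * (M ^ (a + ((n:ℝ) + 1) * b - M - 1) * M ^ (c + ((n:ℝ) + 1) * d - M - 1))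
        ≤ Real.Gamma (a + ((n:ℝ) + 1) * b) * Real.Gamma (c + ((n:ℝ) + 1) * d) := by
      nlinarith [mul_le_mul h1 h2 (by positivity)
        (le_trans (by positivity) h1)]
    have step2 : M ^ (a + ((n:ℝ) + 1) * b - M - 1) * M ^ (c + ((n:ℝ) + 1) * d - M - 1)
        = Q * (M ^ (b + d)) ^ (n + 1) := by
      rw [← Real.rpow_add hMpos]
      have e1 : a + ((n:ℝ) + 1) * b - M - 1 + (c + ((n:ℝ) + 1) * d - M - 1)
          = (a + c - 2 * M - 2) + (b + d) * (((n + 1 : ℕ) : ℝ)) := by push_cast; ring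
      rw [e1, Real.rpow_add hMpos, hQdef, Real.rpow_mul hMpos.le, Real.rpow_natCast]
    have step3 : (16:ℝ) ^ (n + 1) ≤ (M ^ (b + d)) ^ (n + 1) :=
      pow_le_pow_left₀ (by norm_num) hM16 _
    calc 1/36 * Q * (16:ℝ) ^ (n+1) ≤ 1/36 * Q * (M ^ (b+d)) ^ (n+1) := by
          have : (0:ℝ) < 1/36 * Q := by positivity
          nlinarith
      _ = 1/36 * (M ^ (a + ((n:ℝ) + 1) * b - M - 1) * M ^ (c + ((n:ℝ) + 1) * d - M - 1)) := by
          rw [step2]; ring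
      _ ≤ _ := step1
  have hDpos : (0:ℝ) < 1/36 * Q * (16:ℝ) ^ (n + 1) := by positivity
  calc N / (Real.Gamma (a + ((n:ℝ) + 1) * b) * Real.Gamma (c + ((n:ℝ) + 1) * d))
      ≤ N / (1/36 * Q * (16:ℝ) ^ (n + 1)) := by gcongr
    _ = 36 * N / Q * (1/16) ^ n * (1/16) := by
        rw [div_pow, one_pow]
        field_simp
        ring
    _ ≤ 36 * N / Q * (1/16) ^ n := by
        have : (0:ℝ) ≤ 36 * N / Q * (1/16) ^ n := by positivity
        nlinarith

lemma summable_master (a b c d : ℝ) (ha : 0 < a) (hc : 0 < c) (hb : 0 ≤ b) (hd : 0 ≤ d)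
    (hbd : 0 < b + d) :
    Summable (fun n : ℕ => ((n:ℝ) + 3) ^ 3 *
      (Real.Gamma a * Real.Gamma c /
        (Real.Gamma (a + ((n:ℝ) + 1) * b) * Real.Gamma (c + ((n:ℝ) + 1) * d))) * 2 ^ (n + 2)) := by
  obtain ⟨K, hK, hKb⟩ := coeff_bound a b c d ha hc hb hd hbd
  have base : Summable (fun n : ℕ => ((n:ℝ)) ^ 3 * (1/8:ℝ) ^ n) := by
    simpa using summable_pow_mul_geometric_of_norm_lt_one 3 (r := (1/8:ℝ)) (by norm_num)
  have g0 : Summable (fun n : ℕ => (1/8:ℝ) ^ n) := by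
    simpa using summable_pow_mul_geometric_of_norm_lt_one 0 (r := (1/8:ℝ)) (by norm_num)
  have g1 : Summable (fun n : ℕ => ((n:ℝ)) ^ 1 * (1/8:ℝ) ^ n) :=
    summable_pow_mul_geometric_of_norm_lt_one 1 (r := (1/8:ℝ)) (by norm_num)
  have g2 : Summable (fun n : ℕ => ((n:ℝ)) ^ 2 * (1/8:ℝ) ^ n) :=
    summable_pow_mul_geometric_of_norm_lt_one 2 (r := (1/8:ℝ)) (by norm_num)
  have s3 : Summable (fun n : ℕ => ((n:ℝ) + 3) ^ 3 * (1/8:ℝ) ^ n) := by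
    have := ((base.add (g2.mul_left 9)).add ((g1.mul_left 27).add (g0.mul_left 27)))
    refine this.congr fun n => ?_
    ring
  have S : Summable (fun n : ℕ => (4 * K) * (((n:ℝ) + 3) ^ 3 * (1/8:ℝ) ^ n)) := s3.mul_left _
  have S' : Summable (fun n : ℕ => ((n:ℝ) + 3) ^ 3 * (K * (1/16:ℝ) ^ n) * 2 ^ (n + 2)) := by
    refine S.congr fun n => ?_
    have h16 : (1/8:ℝ) ^ n = (1/16:ℝ) ^ n * 2 ^ n := by
      rw [← mul_pow]; norm_num
    rw [h16, pow_add]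
    ring
  refine S'.of_nonneg_of_le (fun n => ?_) (fun n => ?_)
  · have h1 : (0:ℝ) < Real.Gamma (a + ((n:ℝ) + 1) * b) := Real.Gamma_pos_of_pos (by positivity)
    have h2 : (0:ℝ) < Real.Gamma (c + ((n:ℝ) + 1) * d) := Real.Gamma_pos_of_pos (by positivity)
    have h3 : (0:ℝ) < Real.Gamma a := Real.Gamma_pos_of_pos ha
    have h4 : (0:ℝ) < Real.Gamma c := Real.Gamma_pos_of_pos hc
    positivity
  · gcongr
    exact hKb n

lemma hasDerivAt_tsum_monomial (a : ℕ → ℝ) (k : ℕ → ℕ)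
    (h0 : Summable (fun n => |a n| * 2 ^ (k n)))
    (h1 : Summable (fun n => |a n| * (k n : ℝ) * 2 ^ (k n - 1)))
    {x : ℝ} (hx : x ∈ Metric.ball (0:ℝ) 2) :
    HasDerivAt (fun y : ℝ => ∑' n, a n * y ^ (k n))
      (∑' n, a n * (k n : ℝ) * x ^ (k n - 1)) x := by
  have habs : ∀ y : ℝ, y ∈ Metric.ball (0:ℝ) 2 → |y| ≤ 2 := by
    intro y hy
    have := Metric.mem_ball.mp hy
    rw [Real.dist_eq, sub_zero] at this
    linarith
  refine hasDerivAt_of_tendstoUniformlyOn (l := (atTop : Filter (Finset ℕ)))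
    (f := fun t y => ∑ n ∈ t, a n * y ^ (k n))
    (f' := fun t y => ∑ n ∈ t, a n * (k n : ℝ) * y ^ (k n - 1))
    (g := fun y : ℝ => ∑' n, a n * y ^ (k n))
    (g' := fun y : ℝ => ∑' n, a n * (k n : ℝ) * y ^ (k n - 1))
    Metric.isOpen_ball ?_ ?_ ?_ hx
  · refine tendstoUniformlyOn_tsum h1 fun n y hy => ?_
    rw [Real.norm_eq_abs, abs_mul, abs_mul, abs_pow, Nat.abs_cast]
    gcongr
    exact habs y hy
  · refine Eventually.of_forall fun t y _ => ?_
    refine HasDerivAt.fun_sum fun n _ => ?_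
    simpa [mul_assoc] using (hasDerivAt_pow (k n) y).const_mul (a n)
  · intro y hy
    have hsum : Summable (fun n => a n * y ^ (k n)) := by
      refine Summable.of_abs (h0.of_nonneg_of_le (fun n => abs_nonneg _) fun n => ?_)
      rw [abs_mul, abs_pow]
      exact mul_le_mul_of_nonneg_left
        (pow_le_pow_left₀ (abs_nonneg y) (habs y hy) _) (abs_nonneg _)
    exact hsum.hasSum

lemma cb1 (n : ℕ) : (1:ℝ) ≤ ((n:ℝ)+3)^3 := by
  nlinarith [Nat.cast_nonneg (α := ℝ) n, sq_nonneg ((n:ℝ))]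
lemma cb2 (n : ℕ) : ((n:ℝ)+2) ≤ ((n:ℝ)+3)^3 := by
  nlinarith [Nat.cast_nonneg (α := ℝ) n, sq_nonneg ((n:ℝ))]
lemma cb3 (n : ℕ) : ((n:ℝ)+2)*((n:ℝ)+1) ≤ ((n:ℝ)+3)^3 := by
  nlinarith [Nat.cast_nonneg (α := ℝ) n, sq_nonneg ((n:ℝ))]
lemma cb4 (n : ℕ) : ((n:ℝ)+2)*((n:ℝ)+1)*(n:ℝ) ≤ ((n:ℝ)+3)^3 := by
  nlinarith [Nat.cast_nonneg (α := ℝ) n, sq_nonneg ((n:ℝ)), pow_nonneg (Nat.cast_nonneg (α := ℝ) n) 3]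

lemma mono_bound (c : ℕ → ℝ) (hc : ∀ n, 0 ≤ c n)
    (hM : Summable (fun n : ℕ => ((n:ℝ)+3)^3 * c n * 2^(n+2)))
    (q : ℕ → ℝ) (k : ℕ → ℕ) (hq : ∀ n, 0 ≤ q n) (hq3 : ∀ n, q n ≤ ((n:ℝ)+3)^3)
    (hk : ∀ n, k n ≤ n + 2) :
    Summable (fun n => c n * q n * 2 ^ (k n)) := by
  refine hM.of_nonneg_of_le (fun n => by have := hc n; have := hq n; positivity) (fun n => ?_)
  calc c n * q n * 2 ^ (k n) ≤ c n * (((n:ℝ)+3)^3) * 2^(n+2) := by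
        gcongr <;> first | exact hc n | exact hq3 n | exact hk n | exact mul_nonneg (hc n) (by positivity) | norm_num
    _ = ((n:ℝ)+3)^3 * c n * 2^(n+2) := by ring

lemma wright_derivs (c : ℕ → ℝ) (hc : ∀ n, 0 ≤ c n)
    (hM : Summable (fun n : ℕ => ((n:ℝ)+3)^3 * c n * 2^(n+2))) :
    deriv (fun x : ℝ => x + ∑' n, c n * x^(n+2)) 1 = 1 + ∑' n : ℕ, ((n:ℝ)+2) * c n
    ∧ iteratedDeriv 2 (fun x : ℝ => x + ∑' n, c n * x^(n+2)) 1
        = ∑' n : ℕ, ((n:ℝ)+2)*((n:ℝ)+1) * c n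
    ∧ iteratedDeriv 3 (fun x : ℝ => x + ∑' n, c n * x^(n+2)) 1
        = ∑' n : ℕ, ((n:ℝ)+2)*((n:ℝ)+1)*(n:ℝ) * c n := by
  set a₁ : ℕ → ℝ := fun n => c n * ((n:ℝ)+2) with ha₁
  set a₂ : ℕ → ℝ := fun n => c n * ((n:ℝ)+2) * ((n:ℝ)+1) with ha₂
  have ha₁n : ∀ n, 0 ≤ a₁ n := fun n => by have := hc n; positivity
  have ha₂n : ∀ n, 0 ≤ a₂ n := fun n => by have := hc n; positivity
  have h1B : (1:ℝ) ∈ Metric.ball (0:ℝ) 2 := by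
    norm_num [Metric.mem_ball, Real.dist_eq]
  -- summability obligations
  have h00 : Summable (fun n => |c n| * 2 ^ (n+2)) := by
    refine (mono_bound c hc hM (fun _ => 1) (fun n => n+2) (fun n => by norm_num)
      (fun n => cb1 n) (fun n => le_refl _)).congr fun n => ?_
    rw [abs_of_nonneg (hc n)]; ring
  have h01 : Summable (fun n => |c n| * (((n+2 : ℕ)) : ℝ) * 2 ^ ((n+2) - 1)) := by
    refine (mono_bound c hc hM (fun n => (n:ℝ)+2) (fun n => n+2-1)
      (fun n => by positivity)
      (fun n => cb2 n) (fun n => Nat.sub_le _ _)).congr fun n => ?_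
    rw [abs_of_nonneg (hc n)]; push_cast; ring
  have h10 : Summable (fun n => |a₁ n| * 2 ^ (n+1)) := by
    refine (mono_bound c hc hM (fun n => (n:ℝ)+2) (fun n => n+1)
      (fun n => by positivity)
      (fun n => cb2 n) (fun n => Nat.le_succ _)).congr fun n => ?_
    rw [abs_of_nonneg (ha₁n n)]
  have h11 : Summable (fun n => |a₁ n| * (((n+1 : ℕ)) : ℝ) * 2 ^ ((n+1) - 1)) := by
    refine (mono_bound c hc hM (fun n => ((n:ℝ)+2)*((n:ℝ)+1)) (fun n => n+1-1)
      (fun n => by positivity)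
      (fun n => cb3 n) (fun n => (Nat.sub_le _ _).trans (Nat.le_succ _))).congr fun n => ?_
    rw [abs_of_nonneg (ha₁n n)]; push_cast; ring
  have h20 : Summable (fun n => |a₂ n| * 2 ^ n) := by
    refine (mono_bound c hc hM (fun n => ((n:ℝ)+2)*((n:ℝ)+1)) (fun n => n)
      (fun n => by positivity)
      (fun n => cb3 n) (fun n => Nat.le_add_right _ _)).congr fun n => ?_
    rw [abs_of_nonneg (ha₂n n)]; ring
  have h21 : Summable (fun n => |a₂ n| * ((n : ℕ) : ℝ) * 2 ^ (n - 1)) := by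
    refine (mono_bound c hc hM (fun n => ((n:ℝ)+2)*((n:ℝ)+1)*(n:ℝ)) (fun n => n-1)
      (fun n => by positivity)
      (fun n => cb4 n) (fun n => (Nat.sub_le _ _).trans (Nat.le_add_right _ _))).congr fun n => ?_
    rw [abs_of_nonneg (ha₂n n)]; push_cast; ring
  -- termwise derivatives
  have hD0 : ∀ x ∈ Metric.ball (0:ℝ) 2,
      HasDerivAt (fun y : ℝ => ∑' n, c n * y ^ (n+2)) (∑' n, a₁ n * x ^ (n+1)) x := by
    intro x hx
    have := hasDerivAt_tsum_monomial c (fun n => n+2) h00 h01 hx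
    have e : (∑' n, c n * (((n+2 : ℕ)) : ℝ) * x ^ ((n+2) - 1)) = ∑' n, a₁ n * x ^ (n+1) :=
      tsum_congr fun n => by
        simp only [ha₁, show n+2-1 = n+1 from rfl]; push_cast; ring
    exact e ▸ this
  have hD1 : ∀ x ∈ Metric.ball (0:ℝ) 2,
      HasDerivAt (fun y : ℝ => ∑' n, a₁ n * y ^ (n+1)) (∑' n, a₂ n * x ^ n) x := by
    intro x hx
    have := hasDerivAt_tsum_monomial a₁ (fun n => n+1) h10 h11 hx
    have e : (∑' n, a₁ n * (((n+1 : ℕ)) : ℝ) * x ^ ((n+1) - 1)) = ∑' n, a₂ n * x ^ n :=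
      tsum_congr fun n => by
        simp only [ha₁, ha₂, show n+1-1 = n from rfl]; push_cast; ring
    exact e ▸ this
  have hD2 : ∀ x ∈ Metric.ball (0:ℝ) 2,
      HasDerivAt (fun y : ℝ => ∑' n, a₂ n * y ^ n)
        (∑' n, a₂ n * ((n:ℕ) : ℝ) * x ^ (n - 1)) x := fun x hx =>
    hasDerivAt_tsum_monomial a₂ (fun n => n) h20 h21 hx
  -- first derivative of F
  have hF : ∀ x ∈ Metric.ball (0:ℝ) 2,
      HasDerivAt (fun x : ℝ => x + ∑' n, c n * x^(n+2)) (1 + ∑' n, a₁ n * x ^ (n+1)) x :=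
    fun x hx => (hasDerivAt_id' x).add (hD0 x hx)
  have hevF : Set.EqOn (deriv (fun x : ℝ => x + ∑' n, c n * x^(n+2)))
      (fun x => 1 + ∑' n, a₁ n * x ^ (n+1)) (Metric.ball (0:ℝ) 2) :=
    fun x hx => (hF x hx).deriv
  have hd1 : deriv (fun x : ℝ => x + ∑' n, c n * x^(n+2)) 1 = 1 + ∑' n : ℕ, ((n:ℝ)+2) * c n := by
    rw [(hF 1 h1B).deriv]
    congr 1
    exact tsum_congr fun n => by simp only [ha₁, one_pow, mul_one]; ring
  -- second derivative
  have hev2 : Set.EqOn (iteratedDeriv 2 (fun x : ℝ => x + ∑' n, c n * x^(n+2)))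
      (fun x => ∑' n, a₂ n * x ^ n) (Metric.ball (0:ℝ) 2) := by
    intro x hx
    rw [iteratedDeriv_succ, iteratedDeriv_one]
    have e1 : deriv (deriv (fun x : ℝ => x + ∑' n, c n * x^(n+2))) x
        = deriv (fun x => 1 + ∑' n, a₁ n * x ^ (n+1)) x :=
      Filter.EventuallyEq.deriv_eq
        (Filter.eventuallyEq_of_mem (Metric.isOpen_ball.mem_nhds hx) hevF)
    rw [e1, ((hD1 x hx).const_add 1).deriv]
  have hd2 : iteratedDeriv 2 (fun x : ℝ => x + ∑' n, c n * x^(n+2)) 1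
      = ∑' n : ℕ, ((n:ℝ)+2)*((n:ℝ)+1) * c n := by
    rw [hev2 h1B]
    exact tsum_congr fun n => by simp only [ha₂, one_pow, mul_one]; ring
  -- third derivative
  have hd3 : iteratedDeriv 3 (fun x : ℝ => x + ∑' n, c n * x^(n+2)) 1
      = ∑' n : ℕ, ((n:ℝ)+2)*((n:ℝ)+1)*(n:ℝ) * c n := by
    rw [iteratedDeriv_succ]
    have e1 : deriv (iteratedDeriv 2 (fun x : ℝ => x + ∑' n, c n * x^(n+2))) 1
        = deriv (fun x => ∑' n, a₂ n * x ^ n) 1 :=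
      Filter.EventuallyEq.deriv_eq
        (Filter.eventuallyEq_of_mem (Metric.isOpen_ball.mem_nhds h1B) hev2)
    rw [e1, (hD2 1 h1B).deriv]
    exact tsum_congr fun n => by simp only [ha₂, one_pow, mul_one]; ring
  exact ⟨hd1, hd2, hd3⟩


/-- The normalized four-parameter Wright function
`W_{(a,b),(c,d)}(x) = x + ∑_{n=2}^∞ Γ(a)Γ(c) xⁿ / (Γ(a+(n-1)b)Γ(c+(n-1)d))`
(as a function of a real variable, evaluated along the real axis). -/
noncomputable def wrightW (a b c d : ℝ) : ℝ → ℝ := fun x =>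
  x + ∑' n : ℕ, Real.Gamma a * Real.Gamma c /
    (Real.Gamma (a + ((n : ℝ) + 1) * b) * Real.Gamma (c + ((n : ℝ) + 1) * d)) * x ^ (n + 2)


lemma gamma_quot_pos {a c x y : ℝ} (ha : 0 < a) (hc : 0 < c) (hx : 0 < x) (hy : 0 < y) :
    0 < Real.Gamma a * Real.Gamma c / (Real.Gamma x * Real.Gamma y) :=
  div_pos (mul_pos (Real.Gamma_pos_of_pos ha) (Real.Gamma_pos_of_pos hc))
    (mul_pos (Real.Gamma_pos_of_pos hx) (Real.Gamma_pos_of_pos hy))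

lemma sum_dom (c : ℕ → ℝ) (hc : ∀ n, 0 ≤ c n)
    (hM : Summable (fun n : ℕ => ((n:ℝ)+3)^3 * c n * 2^(n+2)))
    (f : ℕ → ℝ) (h0 : ∀ n, 0 ≤ f n) (hf : ∀ n, f n ≤ ((n:ℝ)+3)^3 * c n) :
    Summable f := by
  refine hM.of_nonneg_of_le h0 (fun n => (hf n).trans ?_)
  have h1 : (1:ℝ) ≤ 2^(n+2) := one_le_pow₀ (by norm_num)
  have h2 : 0 ≤ ((n:ℝ)+3)^3 * c n := mul_nonneg (by positivity) (hc n)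
  nlinarith

lemma wrightW_derivs (a b c d : ℝ) (ha : 0 < a) (hc : 0 < c) (hb : 0 ≤ b) (hd : 0 ≤ d)
    (hbd : 0 < b + d) :
    deriv (wrightW a b c d) 1 = 1 + ∑' n : ℕ, ((n:ℝ)+2) *
        (Real.Gamma a * Real.Gamma c /
          (Real.Gamma (a + ((n:ℝ) + 1) * b) * Real.Gamma (c + ((n:ℝ) + 1) * d)))
    ∧ iteratedDeriv 2 (wrightW a b c d) 1 = ∑' n : ℕ, ((n:ℝ)+2)*((n:ℝ)+1) *
        (Real.Gamma a * Real.Gamma c /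
          (Real.Gamma (a + ((n:ℝ) + 1) * b) * Real.Gamma (c + ((n:ℝ) + 1) * d)))
    ∧ iteratedDeriv 3 (wrightW a b c d) 1 = ∑' n : ℕ, ((n:ℝ)+2)*((n:ℝ)+1)*(n:ℝ) *
        (Real.Gamma a * Real.Gamma c /
          (Real.Gamma (a + ((n:ℝ) + 1) * b) * Real.Gamma (c + ((n:ℝ) + 1) * d))) := by
  have := wright_derivs
    (fun n : ℕ => Real.Gamma a * Real.Gamma c /
      (Real.Gamma (a + ((n:ℝ) + 1) * b) * Real.Gamma (c + ((n:ℝ) + 1) * d)))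
    (fun n => (gamma_quot_pos ha hc (by positivity) (by positivity)).le)
    (summable_master a b c d ha hc hb hd hbd)
  exact this

lemma cb5 (α : ℝ) (hα0 : 0 ≤ α) (n : ℕ) :
    ((n:ℝ)+2)*((n:ℝ)+2-α)*(((n:ℝ)+3)/2) ≤ ((n:ℝ)+3)^3 := by
  nlinarith [Nat.cast_nonneg (α := ℝ) n, sq_nonneg ((n:ℝ))]

lemma cb6 (α : ℝ) (hα1 : α ≤ 1) (n : ℕ) :
    ((n:ℝ)+2)*((n:ℝ)+2+α)*(((n:ℝ)+1)/2) ≤ ((n:ℝ)+3)^3 := by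
  nlinarith [Nat.cast_nonneg (α := ℝ) n, sq_nonneg ((n:ℝ))]

set_option maxHeartbeats 1000000 in
/-- if f ∈ K_H^o (so |Aₙ| ≤ (n+1)/2 and |Bₙ| ≤ (n−1)/2) and the
stated Wright-function inequality holds, then L(f) satisfies the harmonic
convexity coefficient condition of order α. -/
theorem Lf_convex_to_convex_coefficient_estimate (α₁ β₁ γ₁ δ₁ α₂ β₂ γ₂ δ₂ α : ℝ) (σ : ℂ) (A B : ℕ → ℂ)
    (hβ₁ : 0 ≤ β₁) (hδ₁ : 0 ≤ δ₁) (hβδ₁ : 0 < β₁ + δ₁)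
    (hβ₂ : 0 ≤ β₂) (hδ₂ : 0 ≤ δ₂) (hβδ₂ : 0 < β₂ + δ₂)
    (hα₁ : 0 < α₁) (hγ₁ : 0 < γ₁) (hα₂ : 0 < α₂) (hγ₂ : 0 < γ₂)
    (hσ : ‖σ‖ < 1) (hα0 : 0 ≤ α) (hα1 : α < 1)
    (hA : ∀ n : ℕ, 1 ≤ n → ‖A n‖ ≤ ((n : ℝ) + 1) / 2)
    (hB : ∀ n : ℕ, 1 ≤ n → ‖B n‖ ≤ ((n : ℝ) - 1) / 2)
    (hyp : (iteratedDeriv 3 (wrightW α₁ β₁ γ₁ δ₁) 1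
          + (4 - α) * iteratedDeriv 2 (wrightW α₁ β₁ γ₁ δ₁) 1
          + 2 * (1 - α) * (deriv (wrightW α₁ β₁ γ₁ δ₁) 1 - 1))
        + ‖σ‖ * (iteratedDeriv 3 (wrightW α₂ β₂ γ₂ δ₂) 1
          + (2 + α) * iteratedDeriv 2 (wrightW α₂ β₂ γ₂ δ₂) 1)
        ≤ 2 * (1 - α)) :
    (∑' n : ℕ, ((n : ℝ) + 2) * ((n : ℝ) + 2 - α) *
        (Real.Gamma α₁ * Real.Gamma γ₁ /
          (Real.Gamma (α₁ + ((n : ℝ) + 1) * β₁) * Real.Gamma (γ₁ + ((n : ℝ) + 1) * δ₁))) * ‖A (n + 2)‖)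
      + ‖σ‖ * ∑' n : ℕ, ((n : ℝ) + 1) * ((n : ℝ) + 1 + α) *
        (Real.Gamma α₂ * Real.Gamma γ₂ /
          (Real.Gamma (α₂ + (n : ℝ) * β₂) * Real.Gamma (γ₂ + (n : ℝ) * δ₂))) * ‖B (n + 1)‖
      ≤ 1 - α := by
  obtain ⟨e1, e2, e3⟩ := wrightW_derivs α₁ β₁ γ₁ δ₁ hα₁ hγ₁ hβ₁ hδ₁ hβδ₁
  obtain ⟨f1, f2, f3⟩ := wrightW_derivs α₂ β₂ γ₂ δ₂ hα₂ hγ₂ hβ₂ hδ₂ hβδ₂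
  rw [e1, e2, e3, f2, f3, add_sub_cancel_left] at hyp
  -- abbreviations
  have hGa₁ : ∀ n : ℕ, 0 < Real.Gamma α₁ * Real.Gamma γ₁ /
      (Real.Gamma (α₁ + ((n:ℝ) + 1) * β₁) * Real.Gamma (γ₁ + ((n:ℝ) + 1) * δ₁)) :=
    fun n => gamma_quot_pos hα₁ hγ₁ (by positivity) (by positivity)
  have hGa₂ : ∀ n : ℕ, 0 < Real.Gamma α₂ * Real.Gamma γ₂ /
      (Real.Gamma (α₂ + ((n:ℝ) + 1) * β₂) * Real.Gamma (γ₂ + ((n:ℝ) + 1) * δ₂)) :=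
    fun n => gamma_quot_pos hα₂ hγ₂ (by positivity) (by positivity)
  have hGb₂ : ∀ n : ℕ, 0 < Real.Gamma α₂ * Real.Gamma γ₂ /
      (Real.Gamma (α₂ + (n:ℝ) * β₂) * Real.Gamma (γ₂ + (n:ℝ) * δ₂)) :=
    fun n => gamma_quot_pos hα₂ hγ₂ (by positivity) (by positivity)
  have hM₁ := summable_master α₁ β₁ γ₁ δ₁ hα₁ hγ₁ hβ₁ hδ₁ hβδ₁
  have hM₂ := summable_master α₂ β₂ γ₂ δ₂ hα₂ hγ₂ hβ₂ hδ₂ hβδ₂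
  -- summability of the pieces (family 1)
  have s1₁ : Summable (fun n : ℕ => ((n:ℝ)+2) *
      (Real.Gamma α₁ * Real.Gamma γ₁ /
        (Real.Gamma (α₁ + ((n:ℝ) + 1) * β₁) * Real.Gamma (γ₁ + ((n:ℝ) + 1) * δ₁)))) := by
    refine sum_dom _ (fun n => (hGa₁ n).le) hM₁ _
      (fun n => by positivity) (fun n => ?_)
    exact mul_le_mul_of_nonneg_right (cb2 n) (hGa₁ n).le
  have s2₁ : Summable (fun n : ℕ => ((n:ℝ)+2)*((n:ℝ)+1) *
      (Real.Gamma α₁ * Real.Gamma γ₁ /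
        (Real.Gamma (α₁ + ((n:ℝ) + 1) * β₁) * Real.Gamma (γ₁ + ((n:ℝ) + 1) * δ₁)))) := by
    refine sum_dom _ (fun n => (hGa₁ n).le) hM₁ _
      (fun n => by positivity) (fun n => ?_)
    exact mul_le_mul_of_nonneg_right (cb3 n) (hGa₁ n).le
  have s3₁ : Summable (fun n : ℕ => ((n:ℝ)+2)*((n:ℝ)+1)*(n:ℝ) *
      (Real.Gamma α₁ * Real.Gamma γ₁ /
        (Real.Gamma (α₁ + ((n:ℝ) + 1) * β₁) * Real.Gamma (γ₁ + ((n:ℝ) + 1) * δ₁)))) := by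
    refine sum_dom _ (fun n => (hGa₁ n).le) hM₁ _
      (fun n => by positivity) (fun n => ?_)
    exact mul_le_mul_of_nonneg_right (cb4 n) (hGa₁ n).le
  have sS₁ : Summable (fun n : ℕ => ((n:ℝ)+2) * ((n:ℝ)+2-α) *
      (Real.Gamma α₁ * Real.Gamma γ₁ /
        (Real.Gamma (α₁ + ((n:ℝ) + 1) * β₁) * Real.Gamma (γ₁ + ((n:ℝ) + 1) * δ₁))) * (((n:ℝ)+3)/2)) := by
    refine sum_dom _ (fun n => (hGa₁ n).le) hM₁ _
      (fun n => by have := (hGa₁ n).le; have : (0:ℝ) ≤ (n:ℝ)+2-α := by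
                     have := Nat.cast_nonneg (α := ℝ) n; linarith
                   positivity) (fun n => ?_)
    calc ((n:ℝ)+2) * ((n:ℝ)+2-α) *
        (Real.Gamma α₁ * Real.Gamma γ₁ /
          (Real.Gamma (α₁ + ((n:ℝ) + 1) * β₁) * Real.Gamma (γ₁ + ((n:ℝ) + 1) * δ₁))) * (((n:ℝ)+3)/2)
        = (((n:ℝ)+2) * ((n:ℝ)+2-α) * (((n:ℝ)+3)/2)) *
          (Real.Gamma α₁ * Real.Gamma γ₁ /
          (Real.Gamma (α₁ + ((n:ℝ) + 1) * β₁) * Real.Gamma (γ₁ + ((n:ℝ) + 1) * δ₁))) := by ring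
      _ ≤ _ := mul_le_mul_of_nonneg_right (cb5 α hα0 n) (hGa₁ n).le
  -- family 2
  have s2₂ : Summable (fun n : ℕ => ((n:ℝ)+2)*((n:ℝ)+1) *
      (Real.Gamma α₂ * Real.Gamma γ₂ /
        (Real.Gamma (α₂ + ((n:ℝ) + 1) * β₂) * Real.Gamma (γ₂ + ((n:ℝ) + 1) * δ₂)))) := by
    refine sum_dom _ (fun n => (hGa₂ n).le) hM₂ _
      (fun n => by positivity) (fun n => ?_)
    exact mul_le_mul_of_nonneg_right (cb3 n) (hGa₂ n).le
  have s3₂ : Summable (fun n : ℕ => ((n:ℝ)+2)*((n:ℝ)+1)*(n:ℝ) *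
      (Real.Gamma α₂ * Real.Gamma γ₂ /
        (Real.Gamma (α₂ + ((n:ℝ) + 1) * β₂) * Real.Gamma (γ₂ + ((n:ℝ) + 1) * δ₂)))) := by
    refine sum_dom _ (fun n => (hGa₂ n).le) hM₂ _
      (fun n => by positivity) (fun n => ?_)
    exact mul_le_mul_of_nonneg_right (cb4 n) (hGa₂ n).le
  have sS₂ : Summable (fun n : ℕ => ((n:ℝ)+2) * ((n:ℝ)+2+α) *
      (Real.Gamma α₂ * Real.Gamma γ₂ /
        (Real.Gamma (α₂ + ((n:ℝ) + 1) * β₂) * Real.Gamma (γ₂ + ((n:ℝ) + 1) * δ₂))) * (((n:ℝ)+1)/2)) := by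
    refine sum_dom _ (fun n => (hGa₂ n).le) hM₂ _
      (fun n => by have := (hGa₂ n).le; positivity) (fun n => ?_)
    calc ((n:ℝ)+2) * ((n:ℝ)+2+α) *
        (Real.Gamma α₂ * Real.Gamma γ₂ /
          (Real.Gamma (α₂ + ((n:ℝ) + 1) * β₂) * Real.Gamma (γ₂ + ((n:ℝ) + 1) * δ₂))) * (((n:ℝ)+1)/2)
        = (((n:ℝ)+2) * ((n:ℝ)+2+α) * (((n:ℝ)+1)/2)) *
          (Real.Gamma α₂ * Real.Gamma γ₂ /
          (Real.Gamma (α₂ + ((n:ℝ) + 1) * β₂) * Real.Gamma (γ₂ + ((n:ℝ) + 1) * δ₂))) := by ring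
      _ ≤ _ := mul_le_mul_of_nonneg_right (cb6 α hα1.le n) (hGa₂ n).le
  -- combine hypothesis
  have comb₁ : (∑' n : ℕ, ((n:ℝ)+2)*((n:ℝ)+1)*(n:ℝ) *
      (Real.Gamma α₁ * Real.Gamma γ₁ /
        (Real.Gamma (α₁ + ((n:ℝ) + 1) * β₁) * Real.Gamma (γ₁ + ((n:ℝ) + 1) * δ₁))))
      + (4 - α) * (∑' n : ℕ, ((n:ℝ)+2)*((n:ℝ)+1) *
      (Real.Gamma α₁ * Real.Gamma γ₁ /
        (Real.Gamma (α₁ + ((n:ℝ) + 1) * β₁) * Real.Gamma (γ₁ + ((n:ℝ) + 1) * δ₁))))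
      + 2 * (1 - α) * (∑' n : ℕ, ((n:ℝ)+2) *
      (Real.Gamma α₁ * Real.Gamma γ₁ /
        (Real.Gamma (α₁ + ((n:ℝ) + 1) * β₁) * Real.Gamma (γ₁ + ((n:ℝ) + 1) * δ₁))))
      = 2 * ∑' n : ℕ, ((n:ℝ)+2) * ((n:ℝ)+2-α) *
      (Real.Gamma α₁ * Real.Gamma γ₁ /
        (Real.Gamma (α₁ + ((n:ℝ) + 1) * β₁) * Real.Gamma (γ₁ + ((n:ℝ) + 1) * δ₁))) * (((n:ℝ)+3)/2) := by
    rw [← tsum_mul_left, ← tsum_mul_left, ← tsum_mul_left,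
      ← Summable.tsum_add s3₁ (s2₁.mul_left (4-α)), ← Summable.tsum_add (s3₁.add (s2₁.mul_left (4-α))) (s1₁.mul_left (2*(1-α)))]
    exact tsum_congr fun n => by ring
  have comb₂ : (∑' n : ℕ, ((n:ℝ)+2)*((n:ℝ)+1)*(n:ℝ) *
      (Real.Gamma α₂ * Real.Gamma γ₂ /
        (Real.Gamma (α₂ + ((n:ℝ) + 1) * β₂) * Real.Gamma (γ₂ + ((n:ℝ) + 1) * δ₂))))
      + (2 + α) * (∑' n : ℕ, ((n:ℝ)+2)*((n:ℝ)+1) *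
      (Real.Gamma α₂ * Real.Gamma γ₂ /
        (Real.Gamma (α₂ + ((n:ℝ) + 1) * β₂) * Real.Gamma (γ₂ + ((n:ℝ) + 1) * δ₂))))
      = 2 * ∑' n : ℕ, ((n:ℝ)+2) * ((n:ℝ)+2+α) *
      (Real.Gamma α₂ * Real.Gamma γ₂ /
        (Real.Gamma (α₂ + ((n:ℝ) + 1) * β₂) * Real.Gamma (γ₂ + ((n:ℝ) + 1) * δ₂))) * (((n:ℝ)+1)/2) := by
    rw [← tsum_mul_left, ← tsum_mul_left, ← Summable.tsum_add s3₂ (s2₂.mul_left (2+α))]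
    exact tsum_congr fun n => by ring
  rw [comb₁, comb₂] at hyp
  -- goal side, part 1
  have hAle : ∀ n : ℕ, ‖A (n+2)‖ ≤ ((n:ℝ)+3)/2 := by
    intro n
    have := hA (n+2) (by omega)
    push_cast at this ⊢
    linarith
  have hG1 : ∀ n : ℕ, ((n : ℝ) + 2) * ((n : ℝ) + 2 - α) *
        (Real.Gamma α₁ * Real.Gamma γ₁ /
          (Real.Gamma (α₁ + ((n : ℝ) + 1) * β₁) * Real.Gamma (γ₁ + ((n : ℝ) + 1) * δ₁))) * ‖A (n + 2)‖
      ≤ ((n:ℝ)+2) * ((n:ℝ)+2-α) *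
      (Real.Gamma α₁ * Real.Gamma γ₁ /
        (Real.Gamma (α₁ + ((n:ℝ) + 1) * β₁) * Real.Gamma (γ₁ + ((n:ℝ) + 1) * δ₁))) * (((n:ℝ)+3)/2) := by
    intro n
    refine mul_le_mul_of_nonneg_left (hAle n) ?_
    have h1 : (0:ℝ) ≤ (n:ℝ)+2-α := by have := Nat.cast_nonneg (α := ℝ) n; linarith
    have := (hGa₁ n).le
    positivity
  have sG1 : Summable (fun n : ℕ => ((n : ℝ) + 2) * ((n : ℝ) + 2 - α) *
        (Real.Gamma α₁ * Real.Gamma γ₁ /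
          (Real.Gamma (α₁ + ((n : ℝ) + 1) * β₁) * Real.Gamma (γ₁ + ((n : ℝ) + 1) * δ₁))) * ‖A (n + 2)‖) := by
    refine sS₁.of_nonneg_of_le (fun n => ?_) hG1
    have h1 : (0:ℝ) ≤ (n:ℝ)+2-α := by have := Nat.cast_nonneg (α := ℝ) n; linarith
    have := (hGa₁ n).le
    positivity
  have hL1 : (∑' n : ℕ, ((n : ℝ) + 2) * ((n : ℝ) + 2 - α) *
        (Real.Gamma α₁ * Real.Gamma γ₁ /
          (Real.Gamma (α₁ + ((n : ℝ) + 1) * β₁) * Real.Gamma (γ₁ + ((n : ℝ) + 1) * δ₁))) * ‖A (n + 2)‖)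
      ≤ ∑' n : ℕ, ((n:ℝ)+2) * ((n:ℝ)+2-α) *
      (Real.Gamma α₁ * Real.Gamma γ₁ /
        (Real.Gamma (α₁ + ((n:ℝ) + 1) * β₁) * Real.Gamma (γ₁ + ((n:ℝ) + 1) * δ₁))) * (((n:ℝ)+3)/2) :=
    Summable.tsum_le_tsum hG1 sG1 sS₁
  -- goal side, part 2
  have hBle : ∀ n : ℕ, ‖B (n+1)‖ ≤ (n:ℝ)/2 := by
    intro n
    have := hB (n+1) (by omega)
    push_cast at this ⊢
    linarith
  have hG2 : ∀ n : ℕ, ((n : ℝ) + 1) * ((n : ℝ) + 1 + α) *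
        (Real.Gamma α₂ * Real.Gamma γ₂ /
          (Real.Gamma (α₂ + (n : ℝ) * β₂) * Real.Gamma (γ₂ + (n : ℝ) * δ₂))) * ‖B (n + 1)‖
      ≤ ((n : ℝ) + 1) * ((n : ℝ) + 1 + α) *
        (Real.Gamma α₂ * Real.Gamma γ₂ /
          (Real.Gamma (α₂ + (n : ℝ) * β₂) * Real.Gamma (γ₂ + (n : ℝ) * δ₂))) * ((n:ℝ)/2) := by
    intro n
    refine mul_le_mul_of_nonneg_left (hBle n) ?_
    have := (hGb₂ n).le
    positivity
  have sT' : Summable (fun n : ℕ => ((n : ℝ) + 1 + 1) * ((n : ℝ) + 1 + 1 + α) *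
        (Real.Gamma α₂ * Real.Gamma γ₂ /
          (Real.Gamma (α₂ + ((n:ℝ) + 1) * β₂) * Real.Gamma (γ₂ + ((n:ℝ) + 1) * δ₂))) * (((n:ℝ)+1)/2)) := by
    refine sS₂.congr fun n => by ring
  have sT : Summable (fun n : ℕ => ((n : ℝ) + 1) * ((n : ℝ) + 1 + α) *
        (Real.Gamma α₂ * Real.Gamma γ₂ /
          (Real.Gamma (α₂ + (n : ℝ) * β₂) * Real.Gamma (γ₂ + (n : ℝ) * δ₂))) * ((n:ℝ)/2)) := by
    refine (summable_nat_add_iff 1).1 (sT'.congr fun n => ?_)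
    push_cast
    ring
  have sG2 : Summable (fun n : ℕ => ((n : ℝ) + 1) * ((n : ℝ) + 1 + α) *
        (Real.Gamma α₂ * Real.Gamma γ₂ /
          (Real.Gamma (α₂ + (n : ℝ) * β₂) * Real.Gamma (γ₂ + (n : ℝ) * δ₂))) * ‖B (n + 1)‖) := by
    refine sT.of_nonneg_of_le (fun n => ?_) hG2
    have := (hGb₂ n).le
    positivity
  have hL2a : (∑' n : ℕ, ((n : ℝ) + 1) * ((n : ℝ) + 1 + α) *
        (Real.Gamma α₂ * Real.Gamma γ₂ /
          (Real.Gamma (α₂ + (n : ℝ) * β₂) * Real.Gamma (γ₂ + (n : ℝ) * δ₂))) * ‖B (n + 1)‖)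
      ≤ ∑' n : ℕ, ((n : ℝ) + 1) * ((n : ℝ) + 1 + α) *
        (Real.Gamma α₂ * Real.Gamma γ₂ /
          (Real.Gamma (α₂ + (n : ℝ) * β₂) * Real.Gamma (γ₂ + (n : ℝ) * δ₂))) * ((n:ℝ)/2) :=
    Summable.tsum_le_tsum hG2 sG2 sT
  have hL2b : (∑' n : ℕ, ((n : ℝ) + 1) * ((n : ℝ) + 1 + α) *
        (Real.Gamma α₂ * Real.Gamma γ₂ /
          (Real.Gamma (α₂ + (n : ℝ) * β₂) * Real.Gamma (γ₂ + (n : ℝ) * δ₂))) * ((n:ℝ)/2))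
      = ∑' n : ℕ, ((n:ℝ)+2) * ((n:ℝ)+2+α) *
      (Real.Gamma α₂ * Real.Gamma γ₂ /
        (Real.Gamma (α₂ + ((n:ℝ) + 1) * β₂) * Real.Gamma (γ₂ + ((n:ℝ) + 1) * δ₂))) * (((n:ℝ)+1)/2) := by
    rw [Summable.tsum_eq_zero_add sT]
    norm_num
    exact tsum_congr fun n => by push_cast; ring
  have σ0 : (0:ℝ) ≤ ‖σ‖ := norm_nonneg σ
  have hL2 := hL2a.trans_eq hL2b
  -- finish
  set X := ∑' n : ℕ, ((n:ℝ)+2) * ((n:ℝ)+2-α) *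
      (Real.Gamma α₁ * Real.Gamma γ₁ /
        (Real.Gamma (α₁ + ((n:ℝ) + 1) * β₁) * Real.Gamma (γ₁ + ((n:ℝ) + 1) * δ₁))) * (((n:ℝ)+3)/2) with hX
  set Y := ∑' n : ℕ, ((n:ℝ)+2) * ((n:ℝ)+2+α) *
      (Real.Gamma α₂ * Real.Gamma γ₂ /
        (Real.Gamma (α₂ + ((n:ℝ) + 1) * β₂) * Real.Gamma (γ₂ + ((n:ℝ) + 1) * δ₂))) * (((n:ℝ)+1)/2) with hY
  calc _ ≤ X + ‖σ‖ * Y := add_le_add hL1 (mul_le_mul_of_nonneg_left hL2 σ0)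
    _ ≤ 1 - α := by nlinarith [hyp]
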